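/- For any FAC poset P, the width w(P) (the rank of the tree Inc(P) of non-empty finite sequences of pairwise incomparable elements ordered by initial segments) equals the antichain rank of P, namely the ordinal rank of the well-founded poset A(P) of non-empty finite antichains of P ordered by reverse inclusion. -/

import Mathlib

universe u

open Ordinal

/-- The rank of a well-founded relation: the least ordinal `γ` admitting a
strictly `r`-decreasing... i.e. `r a b → f a < f b`; equals `sup (rank a + 1)`. -/
noncomputable def relRank {β : Type u} (r : β → β → Prop) : Ordinal.{u} :=
  haveI := Classical.propDecidable (WellFounded r)
  if h : WellFounded r then ⨆ a : β, Order.succ ((h.apply a).rank) else 0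

/-- `extRel T s t` : `s` strictly extends `t` (both in tree `T`). -/
def extRel {α : Type u} (T : Set (List α)) (s t : T) : Prop :=
  t.1 <+: s.1 ∧ t.1 ≠ s.1

/-- Rank of a tree of finite sequences ordered by the initial segment relation. -/
noncomputable def treeRank {α : Type u} (T : Set (List α)) : Ordinal.{u} :=
  relRank (extRel T)

/-- Non-empty finite sequences of pairwise incomparable elements. -/
def IncSeqs (P : Type u) [Preorder P] : Set (List P) :=
  {l | l ≠ [] ∧ l.Pairwise fun x y => ¬ x ≤ y ∧ ¬ y ≤ x}

/-- Non-empty strictly descending finite sequences. -/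
def DecSeqs (P : Type u) [Preorder P] : Set (List P) :=
  {l | l ≠ [] ∧ l.Pairwise fun x y => y < x}

/-- Non-empty bad sequences. -/
def BadSeqs (P : Type u) [Preorder P] : Set (List P) :=
  {l | l ≠ [] ∧ l.Pairwise fun x y => ¬ x ≤ y}

/-- Width of a FAC (quasi-)order: the rank of its tree of antichain sequences. -/
noncomputable def width (P : Type u) [Preorder P] : Ordinal.{u} := treeRank (IncSeqs P)

/-- Height: the rank of the tree of strictly descending sequences. -/
noncomputable def height (P : Type u) [Preorder P] : Ordinal.{u} := treeRank (DecSeqs P)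

/-- Maximal order type: the rank of the tree of bad sequences. -/
noncomputable def mot (P : Type u) [Preorder P] : Ordinal.{u} := treeRank (BadSeqs P)

/-- Finite antichain condition. -/
def FAC (P : Type u) [Preorder P] : Prop :=
  ∀ A : Set P, IsAntichain (· ≤ ·) A → A.Finite

/-- Well quasi-order: every infinite sequence is good. -/
def IsWQO (P : Type u) [Preorder P] : Prop :=
  ∀ f : ℕ → P, ∃ i j : ℕ, i < j ∧ f i ≤ f j

/-- Well partial order. -/
def IsWPO (P : Type u) [Preorder P] : Prop :=
  WellFounded ((· < ·) : P → P → Prop) ∧ FAC P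

section Stmt9Aux

noncomputable def WellFounded.rank {α : Type u} {r : α → α → Prop} (hwf : WellFounded r)
    (a : α) : Ordinal.{u} := (hwf.apply a).rank

theorem WellFounded.rank_eq {α : Type u} {r : α → α → Prop} (hwf : WellFounded r) (a : α) :
    hwf.rank a = ⨆ b : { b // r b a }, Order.succ (hwf.rank b) :=
  (hwf.apply a).rank_eq

theorem WellFounded.rank_lt_of_rel {α : Type u} {r : α → α → Prop} (hwf : WellFounded r)
    {a b : α} (h : r a b) : hwf.rank a < hwf.rank b :=
  Acc.rank_lt_of_rel _ h

variable {P : Type u} [PartialOrder P]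

/-- The type of nonempty finite antichains. -/
abbrev AntiT (P : Type u) [PartialOrder P] :=
  {A : Finset P // A.Nonempty ∧ IsAntichain (· ≤ ·) (A : Set P)}

/-- Reverse strict inclusion on antichains. -/
abbrev rAnti (S T : AntiT P) : Prop := T.1 ⊂ S.1

theorem incomp_symm : Symmetric (fun x y : P => ¬ x ≤ y ∧ ¬ y ≤ x) :=
  fun _ _ h => ⟨h.2, h.1⟩

theorem nodup_of_incseq {l : List P} (hl : l.Pairwise fun x y => ¬ x ≤ y ∧ ¬ y ≤ x) :
    l.Nodup :=
  hl.imp (fun h heq => h.1 (le_of_eq heq))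

open Classical in
/-- Map an incomparable sequence to its underlying antichain. -/
noncomputable def incToAnti (l : IncSeqs P) : AntiT P :=
  ⟨l.1.toFinset,
    by obtain ⟨x, hx⟩ := List.exists_mem_of_ne_nil l.1 l.2.1
       exact ⟨x, List.mem_toFinset.2 hx⟩,
    by intro x hx y hy hne
       have hx' := List.mem_toFinset.1 hx
       have hy' := List.mem_toFinset.1 hy
       haveI : Std.Symm (fun x y : P => ¬ x ≤ y ∧ ¬ y ≤ x) := ⟨fun _ _ h => incomp_symm h⟩
       exact (l.2.2.forall hx' hy' hne).1⟩

open Classical in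
theorem incToAnti_coe (l : IncSeqs P) : (incToAnti l).1 = l.1.toFinset := rfl

theorem incToAnti_ssubset {s t : IncSeqs P} (h : extRel (IncSeqs P) s t) :
    (incToAnti t).1 ⊂ (incToAnti s).1 := by
  classical
  obtain ⟨⟨r, hr⟩, hne⟩ := h
  rw [incToAnti_coe, incToAnti_coe]
  refine ssubset_iff_subset_ne.2 ⟨fun x hx => ?_, fun heq => ?_⟩
  · rw [List.mem_toFinset] at hx ⊢
    exact hr ▸ List.mem_append_left r hx
  · have hns := nodup_of_incseq s.2.2
    have hnt := nodup_of_incseq t.2.2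
    have hcs := List.toFinset_card_of_nodup hns
    have hct := List.toFinset_card_of_nodup hnt
    have hlen : t.1.length < s.1.length := by
      cases r with
      | nil => exact absurd (by simpa using hr) hne
      | cons a as => rw [← hr]; simp
    have : t.1.toFinset.card = s.1.toFinset.card := by rw [heq]
    omega

open Classical in
theorem wf_rAnti (hfac : FAC P) : WellFounded (rAnti (P := P)) := by
  rw [RelEmbedding.wellFounded_iff_isEmpty]
  refine ⟨fun f => ?_⟩
  set g : ℕ → AntiT P := fun n => f n with hg
  have hstep : ∀ n : ℕ, (g n).1 ⊂ (g (n + 1)).1 :=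
    fun n => f.map_rel_iff.2 (Nat.lt_succ_self n)
  have hmono : ∀ m n : ℕ, m ≤ n → (g m).1 ⊆ (g n).1 := by
    intro m n hmn
    induction n with
    | zero => simp_all
    | succ k ih =>
      rcases Nat.lt_succ_iff_lt_or_eq.1 (Nat.lt_succ_of_le hmn) with h | h
      · exact (ih (Nat.lt_succ_iff.1 h)).trans (hstep k).subset
      · exact h ▸ Finset.Subset.refl _
  set S : Set P := ⋃ n, ((g n).1 : Set P) with hS
  have hanti : IsAntichain (· ≤ ·) S := by
    intro x hx y hy hne
    obtain ⟨_, ⟨i, rfl⟩, hxi⟩ := hx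
    obtain ⟨_, ⟨j, rfl⟩, hyj⟩ := hy
    have hxm : x ∈ ((g (max i j)).1 : Set P) := hmono i (max i j) (le_max_left i j) hxi
    have hym : y ∈ ((g (max i j)).1 : Set P) := hmono j (max i j) (le_max_right i j) hyj
    exact (g (max i j)).2.2 hxm hym hne
  have hfin : S.Finite := hfac S hanti
  have hcard : ∀ n : ℕ, n ≤ (g n).1.card := by
    have : StrictMono fun n => (g n).1.card :=
      strictMono_nat_of_lt_succ fun n => Finset.card_lt_card (hstep n)
    exact fun n => this.le_apply
  have hsub : ∀ n : ℕ, (g n).1 ⊆ hfin.toFinset := by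
    intro n x hx
    exact hfin.mem_toFinset.2 (Set.mem_iUnion.2 ⟨n, hx⟩)
  have := (hcard (hfin.toFinset.card + 1)).trans (Finset.card_le_card (hsub _))
  omega

theorem wf_extRel (hfac : FAC P) : WellFounded (extRel (IncSeqs P)) :=
  Subrelation.wf (fun h => incToAnti_ssubset h) (InvImage.wf incToAnti (wf_rAnti hfac))

/-- Extend an incomparable sequence with toFinset `A` to one with toFinset `B ⊇ A`. -/
theorem exists_extension (hfac : FAC P) {l : IncSeqs P} {B : AntiT P}
    (hB : (incToAnti l).1 ⊂ B.1) :
    ∃ l' : IncSeqs P, incToAnti l' = B ∧ extRel (IncSeqs P) l' l := by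
  classical
  set d : List P := (B.1 \ l.1.toFinset).toList with hd
  have hdmem : ∀ x ∈ d, x ∈ B.1 ∧ x ∉ l.1.toFinset := by
    intro x hx
    have := Finset.mem_toList.1 hx
    exact Finset.mem_sdiff.1 this
  have hlmem : ∀ x ∈ l.1, x ∈ B.1 := by
    intro x hx
    exact hB.subset (by rw [incToAnti_coe]; exact List.mem_toFinset.2 hx)
  have hdnodup : d.Nodup := Finset.nodup_toList _
  have hmem : (l.1 ++ d) ∈ IncSeqs P := by
    refine ⟨by simp [l.2.1], ?_⟩
    rw [List.pairwise_append]
    refine ⟨l.2.2, ?_, ?_⟩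
    · refine hdnodup.imp_of_mem ?_
      intro a b ha hb hne
      have haB := (hdmem a ha).1
      have hbB := (hdmem b hb).1
      exact ⟨B.2.2 haB hbB hne, B.2.2 hbB haB hne.symm⟩
    · intro x hx y hy
      have hxB := hlmem x hx
      have hyB := (hdmem y hy).1
      have hne : x ≠ y := fun h => (hdmem y hy).2 (h ▸ List.mem_toFinset.2 hx)
      exact ⟨B.2.2 hxB hyB hne, B.2.2 hyB hxB hne.symm⟩
  have hdne : d ≠ [] := by
    obtain ⟨x, hxB, hxA⟩ := Finset.exists_of_ssubset hB
    intro h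
    have : x ∈ (B.1 \ l.1.toFinset) := Finset.mem_sdiff.2 ⟨hxB, by rw [incToAnti_coe] at hxA; exact hxA⟩
    rw [← Finset.mem_toList, ← hd, h] at this
    simp at this
  refine ⟨⟨l.1 ++ d, hmem⟩, ?_, ⟨List.prefix_append _ _, ?_⟩⟩
  · apply Subtype.ext
    rw [incToAnti_coe]
    show (l.1 ++ d).toFinset = B.1
    rw [List.toFinset_append, hd, Finset.toList_toFinset]
    exact Finset.union_sdiff_of_subset (by
      intro x hx
      exact hlmem x (List.mem_toFinset.1 hx))
  · intro h
    exact hdne (by simpa using h.symm)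

theorem extRel_trans {α : Type u} {T : Set (List α)} {a b c : T}
    (h1 : extRel T a b) (h2 : extRel T b c) : extRel T a c := by
  obtain ⟨hp1, hn1⟩ := h1
  obtain ⟨hp2, hn2⟩ := h2
  refine ⟨hp2.trans hp1, fun h => ?_⟩
  have hlt1 : b.1.length < a.1.length :=
    lt_of_le_of_ne hp1.length_le (fun hl => hn1 (hp1.eq_of_length hl))
  have hlt2 : c.1.length < b.1.length :=
    lt_of_le_of_ne hp2.length_le (fun hl => hn2 (hp2.eq_of_length hl))
  have := congrArg List.length h
  omega

theorem rank_eq_rank (hfac : FAC P) (l : IncSeqs P) :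
    (wf_extRel hfac).rank l = (wf_rAnti hfac).rank (incToAnti l) := by
  induction l using (wf_extRel hfac).induction with
  | _ l IH =>
  apply le_antisymm
  · rw [WellFounded.rank_eq]
    apply Ordinal.iSup_le
    rintro ⟨s, hs⟩
    rw [Order.succ_le_iff, IH s hs]
    exact (wf_rAnti hfac).rank_lt_of_rel (incToAnti_ssubset hs)
  · have key : ∀ B : AntiT P, ∀ m : IncSeqs P,
        (∀ s, extRel (IncSeqs P) s m →
          (wf_extRel hfac).rank s = (wf_rAnti hfac).rank (incToAnti s)) →
        incToAnti m = B → (wf_rAnti hfac).rank B ≤ (wf_extRel hfac).rank m := by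
      intro B
      induction B using (wf_rAnti hfac).induction with
      | _ B IHB =>
      intro m hm hmB
      rw [WellFounded.rank_eq (a := B)]
      apply Ordinal.iSup_le
      rintro ⟨C, hC⟩
      obtain ⟨l', hl'C, hext⟩ :=
        exists_extension hfac (B := C) (by rw [hmB]; exact hC)
      have h1 : (wf_rAnti hfac).rank C ≤ (wf_extRel hfac).rank l' :=
        IHB C hC l' (fun s hs => hm s (extRel_trans hs hext)) hl'C
      rw [Order.succ_le_iff]
      exact lt_of_le_of_lt h1 ((wf_extRel hfac).rank_lt_of_rel hext)
    exact key _ l IH rfl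

theorem incToAnti_surj (A : AntiT P) : ∃ l : IncSeqs P, incToAnti l = A := by
  classical
  refine ⟨⟨A.1.toList, A.2.1.toList_ne_nil, ?_⟩, ?_⟩
  · refine (A.1.nodup_toList).imp_of_mem ?_
    intro a b ha hb hne
    have haA := Finset.mem_toList.1 ha
    have hbA := Finset.mem_toList.1 hb
    exact ⟨A.2.2 haA hbA hne, A.2.2 hbA haA hne.symm⟩
  · apply Subtype.ext
    rw [incToAnti_coe]
    exact Finset.toList_toFinset A.1

theorem relRank_eq_of_wf {β : Type u} {r : β → β → Prop} (h : WellFounded r) :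
    relRank r = ⨆ a : β, Order.succ (h.rank a) := by
  unfold relRank
  rw [dif_pos h]
  rfl

end Stmt9Aux

/-- The width of a FAC poset equals its antichain rank: the rank of
the well-founded poset of non-empty (finite) antichains ordered by reverse inclusion. -/
theorem stmt_9 {P : Type u} [PartialOrder P] (hfac : FAC P) :
    width P =
      relRank (fun S T : {A : Finset P // A.Nonempty ∧ IsAntichain (· ≤ ·) (A : Set P)} =>
        T.1 ⊂ S.1) := by
  have hwfS := wf_extRel hfac
  have hwfA := wf_rAnti hfac
  show treeRank (IncSeqs P) = relRank (rAnti (P := P))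
  rw [treeRank, relRank_eq_of_wf hwfS, relRank_eq_of_wf hwfA]
  apply le_antisymm
  · apply Ordinal.iSup_le
    intro l
    rw [rank_eq_rank hfac l]
    exact Ordinal.le_iSup _ (incToAnti l)
  · apply Ordinal.iSup_le
    intro A
    obtain ⟨l, hl⟩ := incToAnti_surj A
    rw [← hl, ← rank_eq_rank hfac l]
    exact Ordinal.le_iSup _ l
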